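/- Let (G,λ) be a temporal graph, let s,z be distinct vertices, and let e be an edge of G with endpoints s and z, with λ(e) = α. Let G′ be obtained from G by deleting every edge active at timestep α (i.e., removing λ⁻¹(α)) and let λ′ be the restriction of λ to E(G′). Then maxD(G,λ,s,z) = maxD(G′,λ′,s,z) + 1 and minC(G,λ,s,z) = minC(G′,λ′,s,z) + 1. -/

import Mathlib

/-- A (finite, loopless) multigraph: a vertex type, an edge type, and an
endpoints function assigning to each edge an unordered pair of distinct vertices. -/
structure Multigraph where
  V : Type
  E : Type
  fintypeV : Fintype V
  decEqV : DecidableEq V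
  fintypeE : Fintype E
  decEqE : DecidableEq E
  ends : E → Sym2 V
  loopless : ∀ e, ¬ (ends e).IsDiag

attribute [instance] Multigraph.fintypeV Multigraph.decEqV Multigraph.fintypeE Multigraph.decEqE

/-- A temporal `s,z`-path in the temporal graph `(G, lam)`: an alternating sequence of
pairwise distinct vertices and edges, starting at `s`, ending at `z`, whose edges appear
at non-decreasing timesteps. -/
structure TPath (G : Multigraph) (lam : G.E → ℕ) (s z : G.V) where
  verts : List G.V
  edges : List G.E
  len_eq : verts.length = edges.length + 1
  head_eq : verts.head? = some s
  last_eq : verts.getLast? = some z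
  nodup : verts.Nodup
  ends_eq : ∀ (i : ℕ) (h : i < edges.length),
      G.ends (edges.get ⟨i, h⟩) = s(verts.get ⟨i, by omega⟩, verts.get ⟨i + 1, by omega⟩)
  mono : List.Chain' (· ≤ ·) (edges.map lam)

/-- The set of timesteps at which a temporal path is active. -/
def TPath.times {G : Multigraph} {lam : G.E → ℕ} {s z : G.V} (P : TPath G lam s z) : Set ℕ :=
  {t | ∃ e ∈ P.edges, lam e = t}

/-- Two temporal `s,z`-paths are snapshot disjoint if they are not both active at any
common timestep. -/
def SnapDisjoint {G : Multigraph} {lam : G.E → ℕ} {s z : G.V} (P Q : TPath G lam s z) : Prop :=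
  P.times ∩ Q.times = ∅

/-- A set `S` of timesteps is a snapshot `s,z`-cut if every temporal `s,z`-path uses an
edge active at some timestep in `S`. -/
def IsSnapCut (G : Multigraph) (lam : G.E → ℕ) (s z : G.V) (S : Set ℕ) : Prop :=
  ∀ P : TPath G lam s z, ∃ e ∈ P.edges, lam e ∈ S

/-- `maxD G lam s z`: the maximum number of pairwise snapshot disjoint temporal `s,z`-paths. -/
noncomputable def maxD (G : Multigraph) (lam : G.E → ℕ) (s z : G.V) : ℕ :=
  sSup {k | ∃ f : Fin k → TPath G lam s z, ∀ i j, i ≠ j → SnapDisjoint (f i) (f j)}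

/-- `minC G lam s z`: the minimum size of a snapshot `s,z`-cut. -/
noncomputable def minC (G : Multigraph) (lam : G.E → ℕ) (s z : G.V) : ℕ :=
  sInf {h | ∃ S : Finset ℕ, S.card = h ∧ IsSnapCut G lam s z ↑S}

/-- A proper timefunction: each edge is active at a positive timestep, and no two parallel
edges are active at the same timestep. -/
def ProperTime (G : Multigraph) (lam : G.E → ℕ) : Prop :=
  (∀ e, 0 < lam e) ∧ ∀ e f, e ≠ f → G.ends e = G.ends f → lam e ≠ lam f

/-- `G` is Mengerian for time: for every proper timefunction and every pair of distinct
vertices, the maximum number of pairwise snapshot disjoint temporal `s,z`-paths equals the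
minimum size of a snapshot `s,z`-cut. -/
def Mengerian (G : Multigraph) : Prop :=
  ∀ lam : G.E → ℕ, ProperTime G lam → ∀ s z : G.V, s ≠ z →
    maxD G lam s z = minC G lam s z

/-- `H` is a subgraph of `G` (up to isomorphism): `H` embeds into `G`. -/
def IsSubgraph (H G : Multigraph) : Prop :=
  ∃ (fv : H.V → G.V) (fe : H.E → G.E),
    Function.Injective fv ∧ Function.Injective fe ∧
    ∀ e, G.ends (fe e) = (H.ends e).map fv

/-- The m-subdivision of the multiedge `xy` of `G`: delete all edges between `x` and `y`,
add a new vertex (`none`), and join it to each of `x` and `y` by as many parallel edges as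
there were between `x` and `y`. -/
def Multigraph.msubdiv (G : Multigraph) (x y : G.V) : Multigraph where
  V := Option G.V
  E := {e : G.E // G.ends e ≠ s(x, y)} ⊕ ({e : G.E // G.ends e = s(x, y)} × Bool)
  fintypeV := inferInstance
  decEqV := inferInstance
  fintypeE := inferInstance
  decEqE := inferInstance
  ends := fun t =>
    match t with
    | .inl e => (G.ends e.1).map some
    | .inr (_, true) => s(some x, (none : Option G.V))
    | .inr (_, false) => s((none : Option G.V), some y)
  loopless := by
    rintro (⟨e, he⟩ | ⟨e, b⟩)
    · simpa [Sym2.isDiag_map (Option.some_injective _)] using G.loopless e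
    · cases b <;> simp [Sym2.mk_isDiag_iff]

/-- Isomorphism of multigraphs. -/
def MIso (G H : Multigraph) : Prop :=
  ∃ (fv : G.V ≃ H.V) (fe : G.E ≃ H.E), ∀ e, H.ends (fe e) = (G.ends e).map fv

/-- `B` is obtained from `A` by m-subdividing one of its multiedges. -/
def SubdivStep (A B : Multigraph) : Prop :=
  ∃ x y : A.V, (∃ e, A.ends e = s(x, y)) ∧ MIso (A.msubdiv x y) B

/-- `H` is an m-topological minor of `G`: some subgraph of `G` can be obtained from `H` by
a sequence of m-subdivisions. -/
def IsMTopMinor (H G : Multigraph) : Prop :=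
  ∃ K, Relation.ReflTransGen SubdivStep H K ∧ IsSubgraph K G

/-- The multigraph obtained from `G` by keeping only the edges satisfying `P`. -/
def Multigraph.restrictE (G : Multigraph) (P : G.E → Prop) [DecidablePred P] : Multigraph where
  V := G.V
  E := {e : G.E // P e}
  fintypeV := G.fintypeV
  decEqV := G.decEqV
  fintypeE := inferInstance
  decEqE := inferInstance
  ends := fun e => G.ends e.1
  loopless := fun e => G.loopless e.1

/-- The underlying simple graph of a multigraph. -/
def Multigraph.simple (G : Multigraph) : SimpleGraph G.V where
  Adj u v := ∃ e, G.ends e = s(u, v)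
  symm := by
    constructor
    rintro u v ⟨e, he⟩
    exact ⟨e, by rw [he, Sym2.eq_swap]⟩
  loopless := by
    constructor
    rintro u ⟨e, he⟩
    exact G.loopless e (by rw [he]; exact Sym2.mk_isDiag_iff.2 rfl)




section Aux

variable {G : Multigraph} {lam : G.E → ℕ} {s z : G.V}

lemma mem_of_mem_attachWith {α : Type*} {p : α → Prop} {l : List α} {H : ∀ x ∈ l, p x}
    {x : {a // p a}} (hx : x ∈ l.attachWith p H) : x.1 ∈ l := by
  have := List.mem_map_of_mem (f := Subtype.val) hx
  rwa [List.attachWith_map_subtype_val] at this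

lemma mem_attachWith_of_mem {α : Type*} {p : α → Prop} {l : List α} {H : ∀ x ∈ l, p x}
    {a : α} (ha : a ∈ l) : (⟨a, H a ha⟩ : {x // p x}) ∈ l.attachWith p H := by
  have h1 : a ∈ (l.attachWith p H).map Subtype.val := by
    rw [List.attachWith_map_subtype_val]; exact ha
  obtain ⟨g, hg, hg2⟩ := List.mem_map.mp h1
  have hga : g = ⟨a, H a ha⟩ := Subtype.ext hg2
  rw [← hga]
  exact hg

lemma TPath.edges_ne_nil (hsz : s ≠ z) (P : TPath G lam s z) : P.edges ≠ [] := by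
  intro h
  have hl := P.len_eq
  rw [h] at hl
  simp at hl
  obtain ⟨a, ha⟩ := List.length_eq_one_iff.mp hl
  have h1 := P.head_eq
  have h2 := P.last_eq
  rw [ha] at h1 h2
  simp at h1 h2
  exact hsz (by rw [← h1, h2])

/-- The one-edge path through `e`. -/
def singlePath (hsz : s ≠ z) (e : G.E) (he : G.ends e = s(s, z)) : TPath G lam s z where
  verts := [s, z]
  edges := [e]
  len_eq := rfl
  head_eq := rfl
  last_eq := rfl
  nodup := by simp [hsz]
  ends_eq := by
    intro i h
    simp only [List.length_singleton] at h
    interval_cases i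
    simpa using he
  mono := by exact List.isChain_singleton _

lemma times_singlePath (hsz : s ≠ z) (e : G.E) (he : G.ends e = s(s, z)) :
    (singlePath (lam := lam) hsz e he).times = {lam e} := by
  ext t
  simp [TPath.times, singlePath, eq_comm]

/-- Lift a path in a restricted graph to a path in `G`. -/
def liftPath {Q : G.E → Prop} [DecidablePred Q]
    (P : TPath (G.restrictE Q) (fun f => lam f.1) s z) : TPath G lam s z where
  verts := P.verts
  edges := P.edges.map Subtype.val
  len_eq := by
    have h := List.length_map (as := P.edges) (Subtype.val : {e // Q e} → G.E)
    exact P.len_eq.trans (congrArg (· + 1) h.symm)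
  head_eq := P.head_eq
  last_eq := P.last_eq
  nodup := P.nodup
  ends_eq := by
    intro i h
    have hlen : i < P.edges.length :=
      lt_of_lt_of_eq h (List.length_map (as := P.edges) (Subtype.val : {e // Q e} → G.E))
    have h2 := P.ends_eq i hlen
    simp only [List.get_eq_getElem] at h2 ⊢
    exact (congrArg G.ends (List.getElem_map (Subtype.val : {e // Q e} → G.E))).trans h2
  mono := by
    have h := List.map_map (g := lam) (f := (Subtype.val : {e // Q e} → G.E)) (l := P.edges)
    exact (congrArg (List.Chain' (· ≤ ·)) h).mpr P.mono

lemma times_liftPath {Q : G.E → Prop} [DecidablePred Q]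
    (P : TPath (G.restrictE Q) (fun f => lam f.1) s z) :
    (liftPath P).times = P.times := by
  ext t
  constructor
  · rintro ⟨f, hf, rfl⟩
    obtain ⟨f', hf', rfl⟩ := List.mem_map.mp hf
    exact ⟨f', hf', rfl⟩
  · rintro ⟨f', hf', rfl⟩
    exact ⟨f'.1, List.mem_map_of_mem hf', rfl⟩

/-- Restrict a path of `G` all of whose edges satisfy `Q`. -/
def restrictPath {Q : G.E → Prop} [DecidablePred Q] (P : TPath G lam s z)
    (hQ : ∀ f ∈ P.edges, Q f) : TPath (G.restrictE Q) (fun f => lam f.1) s z where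
  verts := P.verts
  edges := P.edges.attachWith Q hQ
  len_eq := P.len_eq.trans (congrArg (· + 1) List.length_attachWith.symm)
  head_eq := P.head_eq
  last_eq := P.last_eq
  nodup := P.nodup
  ends_eq := by
    intro i h
    have hlen : i < P.edges.length := lt_of_lt_of_eq h List.length_attachWith
    have h2 := P.ends_eq i hlen
    simp only [List.get_eq_getElem] at h2 ⊢
    show G.ends ((P.edges.attachWith Q hQ)[i]'h).1 = _
    exact (congrArg (fun x : {e // Q e} => G.ends x.1) (List.getElem_attachWith h)).trans h2
  mono := by
    have h3 : List.Chain' (· ≤ ·) ((P.edges.attachWith Q hQ).map (fun f => lam f.1)) := by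
      rw [List.attachWith_map_val (f := lam) hQ]
      exact P.mono
    exact h3

lemma times_restrictPath {Q : G.E → Prop} [DecidablePred Q] (P : TPath G lam s z)
    (hQ : ∀ f ∈ P.edges, Q f) :
    (restrictPath P hQ).times = P.times := by
  ext t
  constructor
  · rintro ⟨f', hf', rfl⟩
    have hf'' : f' ∈ P.edges.attachWith Q hQ := hf'
    exact ⟨f'.1, mem_of_mem_attachWith hf'', rfl⟩
  · rintro ⟨f, hf, rfl⟩
    exact ⟨⟨f, hQ f hf⟩, mem_attachWith_of_mem hf, rfl⟩

lemma bddD (hsz : s ≠ z) :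
    BddAbove {k | ∃ f : Fin k → TPath G lam s z, ∀ i j, i ≠ j → SnapDisjoint (f i) (f j)} := by
  refine ⟨Fintype.card G.E, ?_⟩
  rintro k ⟨f, hf⟩
  have hinj : Function.Injective
      (fun i => (f i).edges.head (TPath.edges_ne_nil hsz (f i))) := by
    intro i j hij
    simp only at hij
    by_contra hne
    have h1 : lam ((f i).edges.head (TPath.edges_ne_nil hsz (f i))) ∈ (f i).times :=
      ⟨_, List.head_mem _, rfl⟩
    have h2 : lam ((f i).edges.head (TPath.edges_ne_nil hsz (f i))) ∈ (f j).times :=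
      ⟨_, List.head_mem (TPath.edges_ne_nil hsz (f j)), congrArg lam hij.symm⟩
    exact Set.eq_empty_iff_forall_notMem.mp (hf i j hne) _ ⟨h1, h2⟩
  calc k = Fintype.card (Fin k) := (Fintype.card_fin k).symm
  _ ≤ Fintype.card G.E := Fintype.card_le_of_injective _ hinj

lemma zero_memD :
    0 ∈ {k | ∃ f : Fin k → TPath G lam s z, ∀ i j, i ≠ j → SnapDisjoint (f i) (f j)} :=
  ⟨fun i => i.elim0, fun i => i.elim0⟩

lemma cuts_nonempty (hsz : s ≠ z) :
    {h | ∃ S : Finset ℕ, S.card = h ∧ IsSnapCut G lam s z ↑S}.Nonempty := by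
  refine ⟨(Finset.image lam Finset.univ).card, Finset.image lam Finset.univ, rfl, ?_⟩
  intro P
  refine ⟨P.edges.head (TPath.edges_ne_nil hsz P), List.head_mem _, ?_⟩
  simp

end Aux


/-- if `e` is an edge between `s` and `z` active at timestep `α`, then
deleting all edges active at timestep `α` decreases both `maxD` and `minC` by exactly 1. -/
theorem stmt11 (G : Multigraph) (lam : G.E → ℕ) (hpos : ∀ e, 0 < lam e)
    (s z : G.V) (hsz : s ≠ z) (e : G.E) (he : G.ends e = s(s, z)) (α : ℕ)
    (hα : lam e = α) :
    maxD G lam s z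
        = maxD (G.restrictE (fun f => lam f ≠ α)) (fun f => lam f.1) s z + 1 ∧
    minC G lam s z
        = minC (G.restrictE (fun f => lam f ≠ α)) (fun f => lam f.1) s z + 1 := by
  constructor
  · -- maxD
    have hDne : {k | ∃ f : Fin k → TPath G lam s z,
        ∀ i j, i ≠ j → SnapDisjoint (f i) (f j)}.Nonempty := ⟨0, zero_memD⟩
    have hD'ne : {k | ∃ f : Fin k → TPath (G.restrictE (fun f => lam f ≠ α))
          (fun f => lam f.1) s z,
        ∀ i j, i ≠ j → SnapDisjoint (f i) (f j)}.Nonempty := ⟨0, zero_memD⟩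
    have hDbdd := bddD (G := G) (lam := lam) hsz
    have hD'bdd := bddD (G := G.restrictE (fun f => lam f ≠ α))
      (lam := fun f => lam f.1) hsz
    apply le_antisymm
    · -- maxD G ≤ maxD G' + 1
      apply csSup_le hDne
      rintro k ⟨f, hf⟩
      match k, f, hf with
      | 0, f, hf => omega
      | k' + 1, f, hf =>
        by_cases hex : ∃ i₀ : Fin (k' + 1), α ∈ (f i₀).times
        · obtain ⟨i₀, hi₀⟩ := hex
          have hmem' : k' ∈ {k | ∃ f : Fin k → TPath (G.restrictE (fun f => lam f ≠ α))
                (fun f => lam f.1) s z, ∀ i j, i ≠ j → SnapDisjoint (f i) (f j)} := by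
            refine ⟨fun i => restrictPath (f (i₀.succAbove i))
              (fun g hg hgα => Set.eq_empty_iff_forall_notMem.mp
                (hf _ _ (Fin.succAbove_ne i₀ i)) α ⟨⟨g, hg, hgα⟩, hi₀⟩), ?_⟩
            intro i j hij
            beta_reduce
            have hd : SnapDisjoint (f (i₀.succAbove i)) (f (i₀.succAbove j)) :=
                hf _ _ (fun h => hij (Fin.succAbove_right_injective h))
            unfold SnapDisjoint at hd ⊢
            rw [times_restrictPath, times_restrictPath]
            exact hd
          have h4 : k' ≤ maxD (G.restrictE (fun f => lam f ≠ α)) (fun f => lam f.1) s z :=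
            le_csSup hD'bdd hmem'
          omega
        · push_neg at hex
          have hmem' : k' + 1 ∈ {k | ∃ f : Fin k → TPath (G.restrictE (fun f => lam f ≠ α))
                (fun f => lam f.1) s z, ∀ i j, i ≠ j → SnapDisjoint (f i) (f j)} := by
            refine ⟨fun i => restrictPath (f i) (fun g hg hgα => hex i ⟨g, hg, hgα⟩), ?_⟩
            intro i j hij
            beta_reduce
            have hd := hf i j hij
            unfold SnapDisjoint at hd ⊢
            rw [times_restrictPath, times_restrictPath]
            exact hd
          have h4 : k' + 1 ≤ maxD (G.restrictE (fun f => lam f ≠ α)) (fun f => lam f.1) s z :=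
            le_csSup hD'bdd hmem'
          omega
    · -- maxD G' + 1 ≤ maxD G
      obtain ⟨f', hf'⟩ := Nat.sSup_mem hD'ne hD'bdd
      have hnotα : ∀ (P : TPath (G.restrictE (fun f => lam f ≠ α)) (fun f => lam f.1) s z),
          α ∉ (liftPath P).times := by
        intro P hP
        rw [times_liftPath] at hP
        obtain ⟨g, _, hg⟩ := hP
        exact g.2 hg
      have hmem : maxD (G.restrictE (fun f => lam f ≠ α)) (fun f => lam f.1) s z + 1 ∈
          {k | ∃ f : Fin k → TPath G lam s z, ∀ i j, i ≠ j → SnapDisjoint (f i) (f j)} := by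
        refine ⟨Fin.cons (singlePath hsz e he) (fun i => liftPath (f' i)), ?_⟩
        have haux : ∀ j', SnapDisjoint (G := G) (singlePath hsz e he) (liftPath (f' j')) := by
          intro j'
          unfold SnapDisjoint
          rw [times_singlePath]
          ext t
          simp only [Set.mem_inter_iff, Set.mem_singleton_iff, Set.mem_empty_iff_false,
            iff_false, not_and]
          rintro rfl
          rw [hα]
          exact hnotα (f' j')
        intro i j hij
        rcases Fin.eq_zero_or_eq_succ i with rfl | ⟨i', rfl⟩ <;>
          rcases Fin.eq_zero_or_eq_succ j with rfl | ⟨j', rfl⟩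
        · exact absurd rfl hij
        · simpa only [Fin.cons_zero, Fin.cons_succ] using haux j'
        · have hx := haux i'
          unfold SnapDisjoint at hx ⊢
          simp only [Fin.cons_zero, Fin.cons_succ]
          rw [Set.inter_comm]
          exact hx
        · simp only [Fin.cons_succ]
          have hne' : i' ≠ j' := by
            intro h; exact hij (by rw [h])
          have hd := hf' i' j' hne'
          unfold SnapDisjoint at hd ⊢
          rw [times_liftPath, times_liftPath]
          exact hd
      exact le_csSup hDbdd hmem
  · -- minC
    apply le_antisymm
    · -- minC G ≤ minC G' + 1
      obtain ⟨S', hcard', hcut'⟩ :=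
        Nat.sInf_mem (cuts_nonempty (G := G.restrictE (fun f => lam f ≠ α))
          (lam := fun f => lam f.1) hsz)
      have hcut : IsSnapCut G lam s z ↑(insert α S') := by
        intro P
        by_cases hex : ∃ g ∈ P.edges, lam g = α
        · obtain ⟨g, hg, hgα⟩ := hex
          exact ⟨g, hg, by simp [hgα]⟩
        · push_neg at hex
          obtain ⟨g', hg', hmem⟩ := hcut' (restrictPath P hex)
          have hg'' : g' ∈ P.edges.attachWith _ hex := hg'
          refine ⟨g'.1, mem_of_mem_attachWith hg'', ?_⟩
          simp only [Finset.coe_insert, Set.mem_insert_iff]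
          exact Or.inr hmem
      have h1 : minC G lam s z ≤ (insert α S').card :=
        Nat.sInf_le ⟨insert α S', rfl, hcut⟩
      have h2 : (insert α S').card ≤ S'.card + 1 := Finset.card_insert_le _ _
      have h4 : S'.card = minC (G.restrictE (fun f => lam f ≠ α)) (fun f => lam f.1) s z :=
        hcard'
      omega
    · -- minC G' + 1 ≤ minC G
      obtain ⟨S, hcard, hcut⟩ := Nat.sInf_mem (cuts_nonempty (G := G) (lam := lam) hsz)
      have hαS : α ∈ S := by
        obtain ⟨g, hg, hmem⟩ := hcut (singlePath hsz e he)
        have : g ∈ [e] := hg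
        simp only [List.mem_singleton] at this
        subst this
        have : lam g ∈ S := by simpa using hmem
        rwa [hα] at this
      have hcut' : IsSnapCut (G.restrictE (fun f => lam f ≠ α)) (fun f => lam f.1) s z
          ↑(S.erase α) := by
        intro P
        obtain ⟨g, hg, hmem⟩ := hcut (liftPath P)
        have hg2 : g ∈ P.edges.map Subtype.val := hg
        obtain ⟨g', hg', rfl⟩ := List.mem_map.mp hg2
        refine ⟨g', hg', ?_⟩
        simp only [Finset.coe_erase, Set.mem_diff, Set.mem_singleton_iff]
        exact ⟨hmem, g'.2⟩
      have h1 : minC (G.restrictE (fun f => lam f ≠ α)) (fun f => lam f.1) s z ≤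
          (S.erase α).card :=
        Nat.sInf_le ⟨S.erase α, rfl, hcut'⟩
      have h2 : (S.erase α).card = S.card - 1 := Finset.card_erase_of_mem hαS
      have h3 : 1 ≤ S.card := Finset.card_pos.mpr ⟨α, hαS⟩
      have h4 : S.card = minC G lam s z := hcard
      omega
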